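/- Let K be a field and α ∈ K((T)). For every natural number n there exist p, q ∈ K[X] with q ≠ 0, deg q ≤ n, and orderTop(ι p − α·ι q) > n. In particular, α admits rational approximations (p, q) with orderTop(ι p − α·ι q) exceeding deg q by an arbitrarily large amount. -/

import Mathlib

open Polynomial

/-- The ring homomorphism `K[X] → K((T))` sending `X` to `T⁻¹`. -/
noncomputable def iota {K : Type*} [Field K] : Polynomial K →+* LaurentSeries K :=
  Polynomial.eval₂RingHom (HahnSeries.C : K →+* LaurentSeries K)
    (HahnSeries.single (-1 : ℤ) (1 : K))

lemma iota_monomial {K : Type*} [Field K] (k : ℕ) (a : K) :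
    iota (monomial k a) = HahnSeries.single (-(k : ℤ)) a := by
  simp [iota, eval₂_monomial, HahnSeries.single_pow, HahnSeries.single_mul_single]

lemma iota_coeff_neg {K : Type*} [Field K] (p : Polynomial K) (k : ℕ) :
    (iota p).coeff (-(k : ℤ)) = p.coeff k := by
  induction p using Polynomial.induction_on' with
  | add p q hp hq => simp [map_add, hp, hq]
  | monomial m a =>
    rw [iota_monomial, coeff_monomial, HahnSeries.coeff_single]
    split_ifs with h1 h2 <;> first | rfl | omega

lemma iota_coeff_pos {K : Type*} [Field K] (p : Polynomial K) {j : ℤ} (hj : 0 < j) :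
    (iota p).coeff j = 0 := by
  induction p using Polynomial.induction_on' with
  | add p q hp hq => simp [map_add, hp, hq]
  | monomial m a =>
    rw [iota_monomial, HahnSeries.coeff_single, if_neg]
    omega

lemma iota_smul {K : Type*} [Field K] (c : K) (p : Polynomial K) :
    iota (c • p) = HahnSeries.C c * iota p := by
  rw [Polynomial.smul_eq_C_mul, map_mul]
  have : iota (C c) = HahnSeries.C c := by simp [iota]
  rw [this]

/-- Dirichlet-type lemma: every Laurent series admits rational approximations `(p, q)` with
`deg q ≤ n` and `orderTop (ι p - α ι q) > n`, for every `n`. -/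
theorem exists_rational_approximation {K : Type*} [Field K]
    (α : LaurentSeries K) (n : ℕ) :
    ∃ p q : Polynomial K, q ≠ 0 ∧ q.natDegree ≤ n ∧
      (n : WithTop ℤ) < (iota p - α * iota q).orderTop := by
  -- the linear map sending q to the coefficients of α * ι q at exponents 1..n
  let L : Polynomial.degreeLT K (n + 1) →ₗ[K] (Fin n → K) :=
    { toFun := fun q i => (α * iota (q : Polynomial K)).coeff ((i : ℤ) + 1)
      map_add' := by intro a b; ext i; simp [map_add, mul_add]
      map_smul' := by
        intro c a; ext i
        simp only [RingHom.id_apply, Pi.smul_apply, smul_eq_mul]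
        rw [Submodule.coe_smul, iota_smul, mul_left_comm, HahnSeries.C_mul_eq_smul,
          HahnSeries.coeff_smul, smul_eq_mul]}
  -- L has nontrivial kernel by dimension count
  obtain ⟨q, hq0, hqL⟩ : ∃ q : Polynomial.degreeLT K (n + 1), q ≠ 0 ∧ L q = 0 := by
    by_contra h
    push_neg at h
    have hinj : Function.Injective L := by
      rw [← LinearMap.ker_eq_bot, LinearMap.ker_eq_bot']
      intro m hm
      by_contra hm0
      exact (h m hm0) hm
    have : Module.finrank K (Polynomial.degreeLT K (n + 1)) ≤ Module.finrank K (Fin n → K) :=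
      LinearMap.finrank_le_finrank_of_injective hinj
    rw [(Polynomial.degreeLTEquiv K (n + 1)).finrank_eq] at this
    simp [Module.finrank_pi] at this
  set β := α * iota (q : Polynomial K) with hβ
  have hqpoly : (q : Polynomial K) ≠ 0 := fun h =>
    hq0 (Subtype.ext (by simpa using h))
  have hqdeg : (q : Polynomial K).natDegree ≤ n := by
    have := Polynomial.mem_degreeLT.mp q.2
    exact Polynomial.natDegree_le_iff_degree_le.mpr (by
      exact_mod_cast Order.le_of_lt_succ (by exact_mod_cast this))
  -- coefficients of β at exponents 1..n vanish
  have hcoeff : ∀ j : ℤ, 0 < j → j ≤ n → β.coeff j = 0 := by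
    intro j hj1 hjn
    have hlt : j.toNat - 1 < n := by omega
    have := congrFun hqL ⟨j.toNat - 1, hlt⟩
    simpa [L, show ((j.toNat - 1 : ℕ) : ℤ) + 1 = j by omega] using this
  by_cases hβ0 : β = 0
  · exact ⟨0, q, hqpoly, hqdeg, by simp [← hβ, hβ0]⟩
  -- choose p to cancel the nonpositive part of β
  set m : ℕ := (-β.order).toNat with hm
  set p : Polynomial K := ∑ k ∈ Finset.range (m + 1), monomial k (β.coeff (-(k : ℤ))) with hp
  have hpcoeff : ∀ k : ℕ, p.coeff k = if k ≤ m then β.coeff (-(k : ℤ)) else 0 := by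
    intro k
    rw [hp, Polynomial.finset_sum_coeff]
    simp only [Polynomial.coeff_monomial]
    rw [Finset.sum_ite_eq' (Finset.range (m + 1)) k]
    simp only [Finset.mem_range]
    by_cases h : k ≤ m
    · rw [if_pos (by omega), if_pos h]
    · rw [if_neg (by omega), if_neg h]
  refine ⟨p, q, hqpoly, hqdeg, ?_⟩
  have key : ∀ j : ℤ, j ≤ n → (iota p - β).coeff j = 0 := by
    intro j hj
    rw [HahnSeries.coeff_sub, sub_eq_zero]
    rcases le_or_gt j 0 with hj0 | hj0
    · have hjrep : j = -((-j).toNat : ℤ) := by omega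
      rw [hjrep, iota_coeff_neg, hpcoeff]
      by_cases hkm : (-j).toNat ≤ m
      · rw [if_pos hkm]
      · rw [if_neg hkm]
        have : j < β.order := by
          have := Int.toNat_of_nonneg (neg_nonneg.mpr hj0)
          omega
        rw [← hjrep]
        exact (HahnSeries.coeff_eq_zero_of_lt_order this).symm
    · rw [iota_coeff_pos p hj0, hcoeff j hj0 hj]
  by_cases hd : iota p - β = 0
  · rw [hd]; simp
  · by_contra hle
    push_neg at hle
    rw [← HahnSeries.order_eq_orderTop_of_ne_zero hd] at hle
    have h2 : (iota p - β).order ≤ (n : ℤ) := by exact_mod_cast hle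
    exact hd (HahnSeries.coeff_order_eq_zero.mp (key _ h2))
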